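/- (Plug-in regret under relative perturbation, Theorem 3 Step 4.) Let ι be a nonempty finite index set, a : ι → ℝ with a_p ≥ 0, Z := Σ_p √(a_p) > 0, and let â : ι → ℝ satisfy â_p = 0 whenever a_p = 0 and |â_p − a_p| ≤ ε·a_p for all p with a_p > 0, where 0 ≤ ε ≤ 1/2. Then (Σ_p √(â_p)) · (Σ_{p : a_p > 0} a_p / √(â_p)) ≤ (1 + ε)² · Z². Consequently, for budget B > 0 the plug-in allocation s_p := (B/Ẑ)·√(â_p) with Ẑ := Σ_p √(â_p) satisfies Σ_{p : a_p > 0} a_p / s_p ≤ (1 + ε)² · Z² / B. -/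

import Mathlib

/-- **Plug-in regret under relative perturbation (Theorem 3, Step 4).** If the
plug-in weights `â` share the support of the true weights `a` and have relative
error at most `ε ≤ 1/2` on that support, then the plug-in allocation
proportional to `√(â_p)` achieves variance at most `(1+ε)² Z²/B`. -/
theorem plugin_regret {ι : Type*} [Fintype ι] [Nonempty ι]
    (a : ι → ℝ) (ha : ∀ p, 0 ≤ a p)
    (Z : ℝ) (hZ : Z = ∑ p, Real.sqrt (a p)) (hZpos : 0 < Z)
    (ahat : ι → ℝ)
    (hsupp : ∀ p, a p = 0 → ahat p = 0)
    (ε : ℝ) (hε0 : 0 ≤ ε) (hε : ε ≤ 1 / 2)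
    (hrel : ∀ p, 0 < a p → |ahat p - a p| ≤ ε * a p) :
    (∑ p, Real.sqrt (ahat p)) *
        (∑ p ∈ Finset.univ.filter (fun p => 0 < a p), a p / Real.sqrt (ahat p)) ≤
      (1 + ε) ^ 2 * Z ^ 2 ∧
    ∀ B : ℝ, 0 < B →
      ∑ p ∈ Finset.univ.filter (fun p => 0 < a p),
          a p / ((B / ∑ q, Real.sqrt (ahat q)) * Real.sqrt (ahat p)) ≤
        (1 + ε) ^ 2 * Z ^ 2 / B := by
  have h1ε : (0:ℝ) < 1 - ε := by linarith
  set S := Finset.univ.filter (fun p => 0 < a p) with hS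
  have hmemS : ∀ p, p ∈ S ↔ 0 < a p := by simp [hS]
  have hnotS : ∀ p, p ∉ S → a p = 0 := by
    intro p hp
    by_contra h
    exact hp ((hmemS p).2 (lt_of_le_of_ne (ha p) (Ne.symm h)))
  have hsum_hat : ∑ p, Real.sqrt (ahat p) = ∑ p ∈ S, Real.sqrt (ahat p) := by
    symm
    apply Finset.sum_subset (Finset.subset_univ _)
    intro p _ hp
    simp [hsupp p (hnotS p hp)]
  have hZS : Z = ∑ p ∈ S, Real.sqrt (a p) := by
    rw [hZ]
    symm
    apply Finset.sum_subset (Finset.subset_univ _)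
    intro p _ hp
    simp [hnotS p hp]
  -- pointwise bounds
  have hub : ∀ p ∈ S, Real.sqrt (ahat p) ≤ Real.sqrt (1+ε) * Real.sqrt (a p) := by
    intro p hp
    have hap : 0 < a p := (hmemS p).1 hp
    have h1 : ahat p ≤ (1+ε) * a p := by
      have := (abs_le.1 (hrel p hap)).2; linarith
    calc Real.sqrt (ahat p) ≤ Real.sqrt ((1+ε) * a p) := Real.sqrt_le_sqrt h1
      _ = Real.sqrt (1+ε) * Real.sqrt (a p) := Real.sqrt_mul (by linarith) _
  have hlb : ∀ p ∈ S, a p / Real.sqrt (ahat p) ≤ Real.sqrt (a p) / Real.sqrt (1-ε) := by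
    intro p hp
    have hap : 0 < a p := (hmemS p).1 hp
    have h2 : (1-ε) * a p ≤ ahat p := by
      have := (abs_le.1 (hrel p hap)).1; nlinarith
    have hsq : Real.sqrt (1-ε) * Real.sqrt (a p) ≤ Real.sqrt (ahat p) := by
      rw [← Real.sqrt_mul (le_of_lt h1ε)]
      exact Real.sqrt_le_sqrt h2
    have hpos : 0 < Real.sqrt (1-ε) * Real.sqrt (a p) :=
      mul_pos (Real.sqrt_pos.2 h1ε) (Real.sqrt_pos.2 hap)
    have h3 : a p / Real.sqrt (ahat p) ≤ a p / (Real.sqrt (1-ε) * Real.sqrt (a p)) :=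
      div_le_div_of_nonneg_left (le_of_lt hap) hpos hsq
    calc a p / Real.sqrt (ahat p) ≤ a p / (Real.sqrt (1-ε) * Real.sqrt (a p)) := h3
      _ = Real.sqrt (a p) / Real.sqrt (1-ε) := by
          rw [mul_comm, ← div_div, Real.div_sqrt]
  -- sum bounds
  have hsumU : ∑ p, Real.sqrt (ahat p) ≤ Real.sqrt (1+ε) * Z := by
    rw [hsum_hat, hZS, Finset.mul_sum]
    exact Finset.sum_le_sum hub
  have hsumL : ∑ p ∈ S, a p / Real.sqrt (ahat p) ≤ Z / Real.sqrt (1-ε) := by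
    rw [hZS, Finset.sum_div]
    exact Finset.sum_le_sum hlb
  have hnn1 : 0 ≤ ∑ p, Real.sqrt (ahat p) :=
    Finset.sum_nonneg fun p _ => Real.sqrt_nonneg _
  have hnn2 : 0 ≤ ∑ p ∈ S, a p / Real.sqrt (ahat p) :=
    Finset.sum_nonneg fun p hp =>
      div_nonneg (ha p) (Real.sqrt_nonneg _)
  have hkey : Real.sqrt (1+ε) ≤ (1+ε)^2 * Real.sqrt (1-ε) := by
    have hA : (1:ℝ) ≤ (1+ε)^3 * (1-ε) := by nlinarith [sq_nonneg ε, pow_nonneg hε0 3]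
    have h4 : (1+ε : ℝ) ≤ ((1+ε)^2)^2 * (1-ε) := by nlinarith [mul_le_mul_of_nonneg_left hA (by linarith : (0:ℝ) ≤ 1+ε)]
    calc Real.sqrt (1+ε) ≤ Real.sqrt (((1+ε)^2)^2 * (1-ε)) := Real.sqrt_le_sqrt h4
      _ = (1+ε)^2 * Real.sqrt (1-ε) := by
          rw [Real.sqrt_mul (by positivity), Real.sqrt_sq (by positivity)]
  have hfirst : (∑ p, Real.sqrt (ahat p)) * (∑ p ∈ S, a p / Real.sqrt (ahat p)) ≤
      (1 + ε) ^ 2 * Z ^ 2 := by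
    have hm : (∑ p, Real.sqrt (ahat p)) * (∑ p ∈ S, a p / Real.sqrt (ahat p)) ≤
        (Real.sqrt (1+ε) * Z) * (Z / Real.sqrt (1-ε)) :=
      mul_le_mul hsumU hsumL hnn2 (by positivity)
    have hsq1 : (0:ℝ) < Real.sqrt (1-ε) := Real.sqrt_pos.2 h1ε
    have h5 : (Real.sqrt (1+ε) * Z) * (Z / Real.sqrt (1-ε)) ≤
        ((1+ε)^2 * Real.sqrt (1-ε) * Z) * (Z / Real.sqrt (1-ε)) := by
      have : 0 ≤ Z / Real.sqrt (1-ε) := by positivity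
      gcongr
    have h6 : ((1+ε)^2 * Real.sqrt (1-ε) * Z) * (Z / Real.sqrt (1-ε)) =
        (1+ε)^2 * Z^2 := by
      field_simp
    linarith
  refine ⟨hfirst, ?_⟩
  intro B hB
  have hex : ∃ p, 0 < a p := by
    by_contra h
    push_neg at h
    have : Z = 0 := by
      rw [hZ]
      apply Finset.sum_eq_zero
      intro p _
      have : a p = 0 := le_antisymm (h p) (ha p)
      simp [this]
    linarith
  obtain ⟨p0, hp0⟩ := hex
  have hhatpos : 0 < ahat p0 := by
    have := (abs_le.1 (hrel p0 hp0)).1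
    nlinarith
  have hZhat : 0 < ∑ q, Real.sqrt (ahat q) :=
    Finset.sum_pos' (fun q _ => Real.sqrt_nonneg _)
      ⟨p0, Finset.mem_univ _, Real.sqrt_pos.2 hhatpos⟩
  have hrw : ∑ p ∈ S, a p / ((B / ∑ q, Real.sqrt (ahat q)) * Real.sqrt (ahat p)) =
      ((∑ q, Real.sqrt (ahat q)) * ∑ p ∈ S, a p / Real.sqrt (ahat p)) / B := by
    rw [Finset.mul_sum, Finset.sum_div]
    apply Finset.sum_congr rfl
    intro p _
    rw [div_mul_eq_div_div_swap, div_div_eq_mul_div]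
    ring
  rw [hrw]
  exact div_le_div_of_nonneg_right hfirst hB.le
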